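/- Explicit minimizer of the binary score sum over the weight sphere: let n' ≥ 1, ζ ∈ {0,1}^{n'}, Q > 0, m = Σ_i ζ_i, and assume 0 < m < n'. Define w'* = 1_{n'} − (Q / √(m − m²/n'))(ζ − (m/n') 1_{n'}). Then ‖w'* − 1_{n'}‖₂ = Q, Σ_i w'*_i = n', and ζ·w'* = m − Q √(m − m²/n'). -/

import Mathlib

/-- The all-ones vector in `ℝ^n` (as a Euclidean space). -/
noncomputable def onesVec (n : ℕ) : EuclideanSpace ℝ (Fin n) := WithLp.toLp 2 (fun _ => (1 : ℝ))

/-- explicit minimizer of the binary score sum over the weight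
sphere: for `n' ≥ 1`, `ζ ∈ {0,1}^{n'}`, `Q > 0`, `m = Σ_i ζ_i` with
`0 < m < n'`, the vector `w'* = 1 − (Q/√(m − m²/n'))(ζ − (m/n')1)` satisfies
`‖w'* − 1‖₂ = Q`, `Σ_i w'*_i = n'`, and `ζ·w'* = m − Q √(m − m²/n')`. -/
theorem binary_score_min_explicit_minimizer {n' : ℕ} (hn : 1 ≤ n')
    (ζ : EuclideanSpace ℝ (Fin n')) (hζ : ∀ i, ζ i = 0 ∨ ζ i = 1)
    (Q : ℝ) (hQ : 0 < Q) (m : ℝ) (hm : m = ∑ i, ζ i)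
    (hm0 : 0 < m) (hmn : m < (n' : ℝ))
    (wstar : EuclideanSpace ℝ (Fin n'))
    (hwstar : wstar = onesVec n'
      - (Q / Real.sqrt (m - m ^ 2 / (n' : ℝ))) • (ζ - (m / (n' : ℝ)) • onesVec n')) :
    ‖wstar - onesVec n'‖ = Q ∧
    (∑ i, wstar i) = (n' : ℝ) ∧
    (∑ i, ζ i * wstar i) = m - Q * Real.sqrt (m - m ^ 2 / (n' : ℝ)) := by
  have hn0 : (0:ℝ) < (n' : ℝ) := by exact_mod_cast Nat.pos_of_ne_zero (by omega)
  set s : ℝ := m - m ^ 2 / (n' : ℝ) with hs_def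
  have hs : 0 < s := by
    rw [hs_def]
    have : m ^ 2 / (n' : ℝ) < m := by
      rw [div_lt_iff₀ hn0]
      nlinarith
    linarith
  have hsqrt : 0 < Real.sqrt s := Real.sqrt_pos.mpr hs
  set c : ℝ := Q / Real.sqrt s with hc_def
  have hsq : ∀ i, ζ i ^ 2 = ζ i := by
    intro i; rcases hζ i with h | h <;> rw [h] <;> ring
  have hcoord : ∀ i, wstar i = 1 - c * (ζ i - m / (n' : ℝ)) := by
    intro i
    rw [hwstar]
    simp [onesVec, PiLp.sub_apply, PiLp.smul_apply, smul_eq_mul]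
  have hcs : c * s = Q * Real.sqrt s := by
    rw [hc_def, div_mul_eq_mul_div, div_eq_iff hsqrt.ne', mul_assoc,
      Real.mul_self_sqrt hs.le]
  have hsum2 : (∑ i, wstar i) = (n' : ℝ) := by
    have h1 : ∀ i, wstar i = 1 - c * ζ i + c * (m / (n':ℝ)) := by
      intro i; rw [hcoord i]; ring
    simp only [h1]
    rw [Finset.sum_add_distrib, Finset.sum_sub_distrib, ← Finset.mul_sum, ← hm,
      Finset.sum_const, Finset.sum_const, Finset.card_univ, Fintype.card_fin,
      nsmul_eq_mul, nsmul_eq_mul]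
    field_simp
    ring
  have hsplit : (∑ i, (ζ i - 2 * (m/(n':ℝ)) * ζ i + (m/(n':ℝ))^2)) = s := by
    rw [Finset.sum_add_distrib, Finset.sum_sub_distrib, ← Finset.mul_sum, ← hm,
      Finset.sum_const, Finset.card_univ, Fintype.card_fin, nsmul_eq_mul, hs_def]
    field_simp; ring
  have hsum3 : (∑ i, ζ i * wstar i) = m - Q * Real.sqrt s := by
    have key : (∑ i, ζ i * wstar i) = m - c * s := by
      have h1 : ∀ i, ζ i * wstar i
          = ζ i - c * (ζ i ^ 2) + c * (m / (n':ℝ)) * ζ i := by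
        intro i; rw [hcoord i]; ring
      simp only [h1, hsq]
      rw [Finset.sum_add_distrib, Finset.sum_sub_distrib, ← Finset.mul_sum,
        ← Finset.mul_sum, ← hm, hs_def]
      ring
    rw [key, hcs]
  have hnorm : ‖wstar - onesVec n'‖ = Q := by
    have hnsq : ‖wstar - onesVec n'‖ ^ 2 = Q ^ 2 := by
      rw [← real_inner_self_eq_norm_sq, PiLp.inner_apply]
      have hc2 : ∀ i, (wstar - onesVec n') i = -(c * (ζ i - m / (n':ℝ))) := by
        intro i
        simp [PiLp.sub_apply, hcoord i, onesVec]
      simp only [hc2, RCLike.inner_apply, conj_trivial]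
      have h2 : ∀ i, -(c * (ζ i - m / (n':ℝ))) * -(c * (ζ i - m / (n':ℝ)))
          = c^2 * (ζ i ^ 2 - 2 * (m/(n':ℝ)) * ζ i + (m/(n':ℝ))^2) := by
        intro i; ring
      simp only [h2, hsq]
      rw [← Finset.mul_sum, hsplit, hc_def, div_pow, Real.sq_sqrt hs.le]
      field_simp
    have h1 : 0 ≤ ‖wstar - onesVec n'‖ := norm_nonneg _
    nlinarith
  exact ⟨hnorm, hsum2, hsum3⟩
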